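/- With notation as above, the map τ : TM₁(R) → End_{R-alg}(R⟨⟨x₀,x₁⟩⟩), Φ ↦ κ_Φ, satisfies τ(Φ₁ ⊛₁ Φ₂) = τ(Φ₁) ∘ τ(Φ₂), and is injective: κ_{Φ₁} = κ_{Φ₂} implies Φ₁ = Φ₂. -/

import Mathlib

set_option linter.unusedSectionVars false


/-- Words in the letters x₀, x₁ (0 ↦ x₀, 1 ↦ x₁). -/
abbrev W : Type := List (Fin 2)

variable {R : Type*} [CommRing R] [Algebra ℚ R]

/-- The generator x₁ of R⟨⟨x₀,x₁⟩⟩ (series realized as coefficient functions on words). -/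
def x1R : W → R := fun w => if w = [(1 : Fin 2)] then 1 else 0

/-- The generator x₀ of R⟨⟨x₀,x₁⟩⟩. -/
def x0R : W → R := fun w => if w = [(0 : Fin 2)] then 1 else 0

/-- The unit 1 of R⟨⟨x₀,x₁⟩⟩. -/
def oneR : W → R := fun w => if w = [] then 1 else 0

/-- The concatenation product of series. -/
def cmulR (f g : W → R) : W → R := fun w =>
  ∑ i ∈ Finset.range (w.length + 1), f (w.take i) * g (w.drop i)

/-- The image under the continuous R-algebra endomorphism κ_f (x₀ ↦ x₀, x₁ ↦ f) of a
single word, as a series: the concatenation product of the images of its letters. -/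
def wordImage (f : W → R) : W → (W → R)
  | [] => oneR
  | a :: t => cmulR (if a = (1 : Fin 2) then f else x0R) (wordImage f t)

/-- κ_f applied to a series Φ: Σ_w ⟨Φ|w⟩ κ_f(w).  For f with vanishing constant term
(in particular f ∈ TM₁(R)) only words of length ≤ |w'| contribute to the coefficient
at w', so the sum below computes κ_f(Φ). -/
def kappa (f Φ : W → R) : W → R := fun w =>
  ∑ n ∈ Finset.range (w.length + 1), ∑ v : Fin n → Fin 2,
    Φ (List.ofFn v) * wordImage f (List.ofFn v) w

-- aux
def wordsUpTo (N : ℕ) : Finset W :=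
  (Finset.range (N + 1)).biUnion fun n =>
    Finset.image (fun v : Fin n → Fin 2 => List.ofFn v) Finset.univ

lemma mem_wordsUpTo {N : ℕ} {v : W} : v ∈ wordsUpTo N ↔ v.length ≤ N := by
  simp only [wordsUpTo, Finset.mem_biUnion, Finset.mem_range, Finset.mem_image,
    Finset.mem_univ, true_and]
  constructor
  · rintro ⟨n, hn, u, rfl⟩
    simpa using Nat.lt_succ_iff.mp hn
  · intro h
    exact ⟨v.length, Nat.lt_succ_of_le h, v.get, List.ofFn_get v⟩

lemma kappa_eq (f Φ : W → R) (w : W) :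
    kappa f Φ w = ∑ v ∈ wordsUpTo w.length, Φ v * wordImage f v w := by
  rw [wordsUpTo, Finset.sum_biUnion]
  · refine Finset.sum_congr rfl fun n _ => ?_
    rw [Finset.sum_image fun a _ b _ h => List.ofFn_injective h]
  · intro a ha b hb hab
    refine Finset.disjoint_left.mpr fun v hva hvb => hab ?_
    simp only [Finset.mem_coe, Finset.mem_image, Finset.mem_univ, true_and] at hva hvb
    obtain ⟨u, rfl⟩ := hva
    obtain ⟨u', h⟩ := hvb
    have := congrArg List.length h
    simpa using this.symm

lemma wI_eq_zero {f : W → R} (hf : f [] = 0) :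
    ∀ v w : W, w.length < v.length → wordImage f v w = 0 := by
  intro v
  induction v with
  | nil => intro w h; simp at h
  | cons a t ih =>
    intro w h
    simp only [wordImage, cmulR]
    refine Finset.sum_eq_zero fun i hi => ?_
    rw [Finset.mem_range] at hi
    rcases Nat.eq_zero_or_pos i with rfl | hpos
    · have h0 : (if a = (1 : Fin 2) then f else x0R) (w.take 0) = 0 := by
        by_cases ha : a = (1 : Fin 2) <;> simp [ha, hf, x0R]
      rw [h0, zero_mul]
    · have h' : w.length < t.length + 1 := by simpa using h
      have : (w.drop i).length < t.length := by
        simp only [List.length_drop]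
        omega
      rw [ih _ this, mul_zero]

lemma sum_eq_kappa {f : W → R} (hf : f [] = 0) (Φ : W → R) {N : ℕ} {w : W}
    (h : w.length ≤ N) :
    ∑ v ∈ wordsUpTo N, Φ v * wordImage f v w = kappa f Φ w := by
  rw [kappa_eq]
  refine (Finset.sum_subset ?_ ?_).symm
  · intro v hv
    rw [mem_wordsUpTo] at hv ⊢
    omega
  · intro v hv hv'
    rw [mem_wordsUpTo] at hv'
    rw [wI_eq_zero hf _ _ (by omega), mul_zero]

lemma cmulR_one (A : W → R) : cmulR A oneR = A := by
  funext w
  rw [cmulR, Finset.sum_eq_single w.length]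
  · simp [oneR]
  · intro i hi hne
    have : w.drop i ≠ [] := by
      simp only [ne_eq, List.drop_eq_nil_iff]
      rw [Finset.mem_range] at hi
      omega
    simp [oneR, this]
  · simp

lemma one_cmulR (A : W → R) : cmulR oneR A = A := by
  funext w
  rw [cmulR, Finset.sum_eq_single 0]
  · simp [oneR]
  · intro i hi hne
    rw [Finset.mem_range] at hi
    have : w.take i ≠ [] := by
      simp only [ne_eq, List.take_eq_nil_iff]
      push_neg
      refine ⟨hne, ?_⟩
      apply List.ne_nil_of_length_pos
      omega
    simp [oneR, this]
  · simp

lemma cmulR_assoc (A B C : W → R) : cmulR (cmulR A B) C = cmulR A (cmulR B C) := by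
  funext w
  simp only [cmulR]
  have L : ∀ i ∈ Finset.range (w.length + 1),
      (∑ j ∈ Finset.range ((w.take i).length + 1),
        A ((w.take i).take j) * B ((w.take i).drop j)) * C (w.drop i)
      = ∑ j ∈ Finset.range (i + 1),
          A (w.take j) * (B ((w.drop j).take (i - j)) * C (w.drop i)) := by
    intro i hi
    rw [Finset.mem_range] at hi
    have hlen : (w.take i).length = i := by
      rw [List.length_take]; omega
    rw [hlen, Finset.sum_mul]
    refine Finset.sum_congr rfl fun j hj => ?_
    rw [Finset.mem_range] at hj
    rw [List.take_take, Nat.min_eq_left (by omega)]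
    have hd : (w.take i).drop j = (w.drop j).take (i - j) := by
      rw [List.take_drop, Nat.add_sub_cancel' (by omega)]
    rw [hd, mul_assoc]
  have Rr : ∀ j ∈ Finset.range (w.length + 1),
      A (w.take j) * (∑ k ∈ Finset.range ((w.drop j).length + 1),
        B ((w.drop j).take k) * C ((w.drop j).drop k))
      = ∑ k ∈ Finset.range (w.length - j + 1),
          A (w.take j) * (B ((w.drop j).take k) * C (w.drop (j + k))) := by
    intro j hj
    rw [List.length_drop, Finset.mul_sum]
    refine Finset.sum_congr rfl fun k hk => ?_
    rw [List.drop_drop]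
  rw [Finset.sum_congr rfl L, Finset.sum_congr rfl Rr,
    Finset.sum_sigma', Finset.sum_sigma']
  refine Finset.sum_nbij' (fun p => ⟨p.2, p.1 - p.2⟩) (fun p => ⟨p.1 + p.2, p.1⟩)
    ?_ ?_ ?_ ?_ ?_
  · rintro ⟨i, j⟩ h
    simp only [Finset.mem_sigma, Finset.mem_range] at h ⊢
    omega
  · rintro ⟨j, k⟩ h
    simp only [Finset.mem_sigma, Finset.mem_range] at h ⊢
    omega
  · rintro ⟨i, j⟩ h
    simp only [Finset.mem_sigma, Finset.mem_range] at h
    have : j + (i - j) = i := by omega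
    simp [this]
  · rintro ⟨j, k⟩ h
    simp
  · rintro ⟨i, j⟩ h
    simp only [Finset.mem_sigma, Finset.mem_range] at h
    have : j + (i - j) = i := by omega
    simp only [this]

lemma wI_append (f : W → R) (p q : W) :
    wordImage f (p ++ q) = cmulR (wordImage f p) (wordImage f q) := by
  induction p with
  | nil => simp [wordImage, one_cmulR]
  | cons a t ih =>
    simp only [List.cons_append, wordImage, List.append_eq, ih, cmulR_assoc]

lemma kappa_oneR (f : W → R) : kappa f oneR = oneR := by
  funext w
  rw [kappa_eq, Finset.sum_eq_single ([] : W)]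
  · simp [oneR, wordImage]
  · intro v hv hvne
    simp [oneR, hvne]
  · intro h
    exact absurd (mem_wordsUpTo.mpr (by simp)) h

lemma wI_single_zero (f : W → R) : wordImage f [(0 : Fin 2)] = x0R := by
  show cmulR (if (0 : Fin 2) = (1 : Fin 2) then f else x0R) (wordImage f []) = x0R
  rw [if_neg (by decide)]
  show cmulR x0R oneR = x0R
  rw [cmulR_one]

lemma kappa_x0R (f : W → R) : kappa f x0R = x0R := by
  funext w
  rw [kappa_eq, Finset.sum_eq_single ([(0 : Fin 2)] : W)]
  · simp [x0R, wI_single_zero]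
  · intro v hv hvne
    simp [x0R, hvne]
  · intro h
    rw [mem_wordsUpTo] at h
    push_neg at h
    have hw : w = [] := by
      cases w with
      | nil => rfl
      | cons a t => simp at h
    subst hw
    simp [wI_single_zero, x0R]

lemma wI_single_one (f : W → R) : wordImage f [(1 : Fin 2)] = f := by
  show cmulR (if (1 : Fin 2) = (1 : Fin 2) then f else x0R) (wordImage f []) = f
  rw [if_pos rfl]
  show cmulR f oneR = f
  rw [cmulR_one]

lemma kappa_x1R {f : W → R} (hf : f [] = 0) : kappa f x1R = f := by
  funext w
  rw [kappa_eq, Finset.sum_eq_single ([(1 : Fin 2)] : W)]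
  · simp [x1R, wI_single_one]
  · intro v hv hvne
    simp [x1R, hvne]
  · intro h
    rw [mem_wordsUpTo] at h
    push_neg at h
    have hw : w = [] := by
      cases w with
      | nil => rfl
      | cons a t => simp at h
    subst hw
    simp [wI_single_one, x1R, hf]

lemma cmulR_wI_eq_zero {f : W → R} (hf : f [] = 0) {p q w : W}
    (h : w.length < p.length + q.length) :
    cmulR (wordImage f p) (wordImage f q) w = 0 := by
  rw [cmulR]
  refine Finset.sum_eq_zero fun j hj => ?_
  rw [Finset.mem_range] at hj
  by_cases hcase : j < p.length
  · rw [wI_eq_zero hf p _ (by rw [List.length_take]; omega), zero_mul]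
  · rw [wI_eq_zero hf q _ (by rw [List.length_drop]; omega), mul_zero]

lemma kappa_cmulR {f : W → R} (hf : f [] = 0) (A B : W → R) :
    kappa f (cmulR A B) = cmulR (kappa f A) (kappa f B) := by
  funext w
  rw [kappa_eq]
  have step1 : ∀ v ∈ wordsUpTo w.length, cmulR A B v * wordImage f v w
      = ∑ i ∈ Finset.range (v.length + 1),
          A (v.take i) * B (v.drop i) *
            cmulR (wordImage f (v.take i)) (wordImage f (v.drop i)) w := by
    intro v _
    rw [cmulR, Finset.sum_mul]
    refine Finset.sum_congr rfl fun i _ => ?_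
    have hv : wordImage f v = cmulR (wordImage f (v.take i)) (wordImage f (v.drop i)) := by
      conv_lhs => rw [← List.take_append_drop i v]
      rw [wI_append]
    rw [hv]
  rw [Finset.sum_congr rfl step1, Finset.sum_sigma']
  have step2 : ∑ p ∈ (wordsUpTo w.length).sigma (fun v => Finset.range (v.length + 1)),
        A (p.1.take p.2) * B (p.1.drop p.2) *
          cmulR (wordImage f (p.1.take p.2)) (wordImage f (p.1.drop p.2)) w
      = ∑ pq ∈ (wordsUpTo w.length ×ˢ wordsUpTo w.length).filter
            (fun pq => pq.1.length + pq.2.length ≤ w.length),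
          A pq.1 * B pq.2 * cmulR (wordImage f pq.1) (wordImage f pq.2) w := by
    refine Finset.sum_nbij' (fun p => (p.1.take p.2, p.1.drop p.2))
      (fun pq => ⟨pq.1 ++ pq.2, pq.1.length⟩) ?_ ?_ ?_ ?_ ?_
    · rintro ⟨v, i⟩ h
      simp only [Finset.mem_sigma, Finset.mem_range, mem_wordsUpTo] at h
      simp only [Finset.mem_filter, Finset.mem_product, mem_wordsUpTo,
        List.length_take, List.length_drop]
      omega
    · rintro ⟨p, q⟩ h
      simp only [Finset.mem_filter, Finset.mem_product, mem_wordsUpTo] at h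
      simp only [Finset.mem_sigma, Finset.mem_range, mem_wordsUpTo, List.length_append]
      omega
    · rintro ⟨v, i⟩ h
      simp only [Finset.mem_sigma, Finset.mem_range, mem_wordsUpTo] at h
      have h1 : v.take i ++ v.drop i = v := List.take_append_drop i v
      have h2 : (v.take i).length = i := by rw [List.length_take]; omega
      simp only [h1, h2]
    · rintro ⟨p, q⟩ h
      simp only [Prod.mk.injEq]
      exact ⟨List.take_left, List.drop_left⟩
    · rintro ⟨v, i⟩ h
      rfl
  rw [step2, Finset.sum_filter]
  have step3 : ∀ pq ∈ wordsUpTo w.length ×ˢ wordsUpTo w.length,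
      (if pq.1.length + pq.2.length ≤ w.length then
        A pq.1 * B pq.2 * cmulR (wordImage f pq.1) (wordImage f pq.2) w else 0)
      = A pq.1 * B pq.2 * cmulR (wordImage f pq.1) (wordImage f pq.2) w := by
    intro pq _
    split_ifs with h
    · rfl
    · rw [cmulR_wI_eq_zero hf (by omega), mul_zero]
  rw [Finset.sum_congr rfl step3]
  calc ∑ pq ∈ wordsUpTo w.length ×ˢ wordsUpTo w.length,
        A pq.1 * B pq.2 * cmulR (wordImage f pq.1) (wordImage f pq.2) w
      = ∑ p ∈ wordsUpTo w.length, ∑ q ∈ wordsUpTo w.length, ∑ j ∈ Finset.range (w.length + 1),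
          A p * wordImage f p (w.take j) * (B q * wordImage f q (w.drop j)) := by
        rw [Finset.sum_product]
        refine Finset.sum_congr rfl fun p _ => Finset.sum_congr rfl fun q _ => ?_
        rw [cmulR, Finset.mul_sum]
        exact Finset.sum_congr rfl fun j _ => by ring
    _ = ∑ j ∈ Finset.range (w.length + 1), ∑ p ∈ wordsUpTo w.length, ∑ q ∈ wordsUpTo w.length,
          A p * wordImage f p (w.take j) * (B q * wordImage f q (w.drop j)) := by
        rw [Finset.sum_congr rfl fun p _ => Finset.sum_comm, Finset.sum_comm]
    _ = ∑ j ∈ Finset.range (w.length + 1), kappa f A (w.take j) * kappa f B (w.drop j) := by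
        refine Finset.sum_congr rfl fun j _ => ?_
        rw [← sum_eq_kappa (N := w.length) hf A (by rw [List.length_take]; omega),
          ← sum_eq_kappa (N := w.length) hf B (by rw [List.length_drop]; omega),
          Finset.sum_mul_sum]
    _ = cmulR (kappa f A) (kappa f B) w := rfl

lemma kappa_wI {f : W → R} (hf : f [] = 0) (g : W → R) (v : W) :
    kappa f (wordImage g v) = wordImage (kappa f g) v := by
  induction v with
  | nil => exact kappa_oneR f
  | cons a t ih =>
    show kappa f (cmulR (if a = (1 : Fin 2) then g else x0R) (wordImage g t))
      = cmulR (if a = (1 : Fin 2) then kappa f g else x0R) (wordImage (kappa f g) t)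
    rw [kappa_cmulR hf, ih]
    by_cases ha : a = (1 : Fin 2)
    · simp [ha]
    · simp [ha, kappa_x0R]


/-- Membership in TM₁(R): ⟨Φ | x₀^k⟩ = 0 for all k ≥ 0 (including the constant term)
and ⟨Φ | x₁⟩ = 1. -/
def TM1mem (Φ : W → R) : Prop :=
  (∀ k : ℕ, Φ (List.replicate k (0 : Fin 2)) = 0) ∧ Φ [(1 : Fin 2)] = 1

/-- The map τ : TM₁(R) → End(R⟨⟨x₀,x₁⟩⟩), Φ ↦ κ_Φ, is multiplicative for ⊛₁
(τ(Φ₁ ⊛₁ Φ₂) = τ(Φ₁) ∘ τ(Φ₂)) and injective. -/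
theorem tau_multiplicative_injective (R : Type*) [CommRing R] [Algebra ℚ R] :
    (∀ Φ₁ Φ₂ : W → R, TM1mem Φ₁ → TM1mem Φ₂ →
      kappa (kappa Φ₁ Φ₂) = (kappa Φ₁) ∘ (kappa Φ₂)) ∧
    (∀ Φ₁ Φ₂ : W → R, TM1mem Φ₁ → TM1mem Φ₂ →
      kappa Φ₁ = kappa Φ₂ → Φ₁ = Φ₂) := by
  constructor
  · intro f g h1 h2
    have hf : f [] = 0 := by simpa using h1.1 0
    have hg : g [] = 0 := by simpa using h2.1 0
    funext Ψ w
    show kappa (kappa f g) Ψ w = kappa f (kappa g Ψ) w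
    rw [kappa_eq, kappa_eq]
    have lhs : ∀ v ∈ wordsUpTo w.length,
        Ψ v * wordImage (kappa f g) v w
        = ∑ u ∈ wordsUpTo w.length, Ψ v * (wordImage g v u * wordImage f u w) := by
      intro v _
      rw [← kappa_wI hf, kappa_eq, Finset.mul_sum]
    have rhs : ∀ u ∈ wordsUpTo w.length,
        kappa g Ψ u * wordImage f u w
        = ∑ v ∈ wordsUpTo w.length, Ψ v * wordImage g v u * wordImage f u w := by
      intro u hu
      rw [← sum_eq_kappa (N := w.length) hg Ψ (mem_wordsUpTo.mp hu), Finset.sum_mul]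
    rw [Finset.sum_congr rfl lhs, Finset.sum_congr rfl rhs, Finset.sum_comm]
    exact Finset.sum_congr rfl fun u _ => Finset.sum_congr rfl fun v _ => by ring
  · intro f g h1 h2 h
    have hf : f [] = 0 := by simpa using h1.1 0
    have hg : g [] = 0 := by simpa using h2.1 0
    calc f = kappa f x1R := (kappa_x1R hf).symm
    _ = kappa g x1R := by rw [h]
    _ = g := kappa_x1R hg
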